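/- The isomorphism classes of indecomposable representations of K(n) with dimension vector (l,1), 1 ≤ l ≤ n, are in bijection with points of the Grassmannian Gr_l(ℂ^n): the bijection sends an indecomposable representation, given by a rank-l matrix M ∈ ℂ^{l×n}, to the l-dimensional row space of M, and two such representations are isomorphic if and only if their matrices have the same row space. -/

import Mathlib

open Matrix LinearMap

lemma aux_finrank_range {n l : ℕ} (M : Matrix (Fin l) (Fin n) ℂ) (h : M.rank = l) :
    Module.finrank ℂ (LinearMap.range M.vecMulLinear) = l := by
  rw [range_vecMulLinear, ← Matrix.rank_eq_finrank_span_row, h]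

lemma aux_inj {n l : ℕ} (M : Matrix (Fin l) (Fin n) ℂ) (h : M.rank = l) :
    Function.Injective M.vecMulLinear := by
  rw [← LinearMap.ker_eq_bot]
  have h1 := aux_finrank_range M h
  have h2 := LinearMap.finrank_range_add_finrank_ker M.vecMulLinear
  rw [h1, Module.finrank_pi, Fintype.card_fin] at h2
  have : Module.finrank ℂ (LinearMap.ker M.vecMulLinear) = 0 := by omega
  exact Submodule.finrank_eq_zero.mp this

/-- indecomposable representations of `K(n)` with dimension vector `(l, 1)`,
encoded by rank-`l` matrices `M : Matrix (Fin l) (Fin n) ℂ`, are classified up to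
isomorphism (simultaneous row operations `g ∈ GL_l(ℂ)` and scaling `c ∈ ℂ*`) by their
row space `range M.vecMulLinear ∈ Gr_l(ℂ^n)`, and every `l`-dimensional subspace of
`ℂ^n` arises this way. -/
theorem stmt_6 (n l : ℕ) (hl : 1 ≤ l) (hln : l ≤ n) :
    (∀ M M' : Matrix (Fin l) (Fin n) ℂ, M.rank = l → M'.rank = l →
      ((∃ (g : GL (Fin l) ℂ) (c : ℂˣ),
          M' = (c : ℂ) • ((g : Matrix (Fin l) (Fin l) ℂ) * M)) ↔
        LinearMap.range M.vecMulLinear = LinearMap.range M'.vecMulLinear)) ∧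
    (∀ U : Submodule ℂ (Fin n → ℂ), Module.finrank ℂ U = l →
      ∃ M : Matrix (Fin l) (Fin n) ℂ, M.rank = l ∧ LinearMap.range M.vecMulLinear = U) := by
  constructor
  · intro M M' hM hM'
    constructor
    · rintro ⟨g, c, rfl⟩
      set A : Matrix (Fin l) (Fin l) ℂ := (c : ℂ) • (g : Matrix (Fin l) (Fin l) ℂ) with hA
      have hAM : (c : ℂ) • ((g : Matrix (Fin l) (Fin l) ℂ) * M) = A * M := by
        rw [hA]; exact (Matrix.smul_mul (c:ℂ) ((g : Matrix (Fin l) (Fin l) ℂ)) M).symm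
      have hAunit : IsUnit A := by
        rw [Matrix.isUnit_iff_isUnit_det, hA, Matrix.det_smul]
        exact ((c.isUnit.pow _).mul ((Matrix.isUnit_iff_isUnit_det _).mp g.isUnit))
      have hcomp : (A * M).vecMulLinear = M.vecMulLinear ∘ₗ A.vecMulLinear := by
        ext v j
        simp [Matrix.vecMulLinear_apply, Matrix.vecMul_vecMul, Matrix.mul_apply_eq_vecMul]
        rfl
      rw [hAM, hcomp, LinearMap.range_comp_of_range_eq_top]
      rw [LinearMap.range_eq_top, Matrix.coe_vecMulLinear]
      exact Matrix.vecMul_surjective_iff_isUnit.mpr hAunit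
    · intro hrange
      have hMi := aux_inj M hM
      have hM'i := aux_inj M' hM'
      let e : (Fin l → ℂ) ≃ₗ[ℂ] (Fin l → ℂ) :=
        (LinearEquiv.ofInjective M'.vecMulLinear hM'i).trans
          ((LinearEquiv.ofEq _ _ hrange.symm).trans
            (LinearEquiv.ofInjective M.vecMulLinear hMi).symm)
      have he : ∀ v, M.vecMulLinear (e v) = M'.vecMulLinear v := by
        intro v
        have h1 : (LinearEquiv.ofInjective M.vecMulLinear hMi) (e v)
            = ⟨M'.vecMulLinear v, hrange ▸ LinearMap.mem_range_self _ v⟩ := by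
          simp only [e, LinearEquiv.trans_apply, LinearEquiv.apply_symm_apply]
          rfl
        have := congrArg Subtype.val h1
        simpa [LinearEquiv.ofInjective_apply] using this
      set A : Matrix (Fin l) (Fin l) ℂ :=
        (LinearMap.toMatrix' (e : (Fin l → ℂ) →ₗ[ℂ] (Fin l → ℂ)))ᵀ with hA
      have hAv : ∀ v : Fin l → ℂ, v ᵥ* A = e v := by
        intro v
        rw [hA, Matrix.vecMul_transpose, ← Matrix.toLin'_apply, Matrix.toLin'_toMatrix']
        rfl
      have hAunit : IsUnit A := by
        rw [← Matrix.vecMul_surjective_iff_isUnit]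
        intro y
        exact ⟨e.symm y, by dsimp only; rw [hAv, e.apply_symm_apply]⟩
      refine ⟨Matrix.GeneralLinearGroup.mk'' A ((Matrix.isUnit_iff_isUnit_det A).mp hAunit), 1, ?_⟩
      have hcoe : ((Matrix.GeneralLinearGroup.mk'' A ((Matrix.isUnit_iff_isUnit_det A).mp hAunit) : GL (Fin l) ℂ) :
          Matrix (Fin l) (Fin l) ℂ) = A := rfl
      rw [hcoe, Units.val_one, one_smul]
      ext i j
      have := congrFun (he (Pi.single i 1)) j
      simp only [Matrix.vecMulLinear_apply] at this
      rw [Matrix.mul_apply_eq_vecMul]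
      calc M' i j = (Pi.single i 1 ᵥ* M') j := by rw [Matrix.single_one_vecMul]; rfl
        _ = (e (Pi.single i 1) ᵥ* M) j := this.symm
        _ = ((Pi.single i 1 ᵥ* A) ᵥ* M) j := by rw [hAv]
        _ = (A i ᵥ* M) j := by rw [Matrix.single_one_vecMul]; rfl
  · intro U hU
    let b : Module.Basis (Fin l) ℂ U := Module.finBasisOfFinrankEq ℂ U hU
    refine ⟨Matrix.of (fun i j => (b i : Fin n → ℂ) j), ?_, ?_⟩
    · have hli : LinearIndependent ℂ (fun i => ((b i : Fin n → ℂ))) := by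
        have := b.linearIndependent
        exact this.map' U.subtype (Submodule.ker_subtype U)
      have := hli.rank_matrix (M := Matrix.of (fun i j => (b i : Fin n → ℂ) j))
      simpa using this
    · rw [range_vecMulLinear]
      have hset : Set.range (Matrix.of (fun i j => (b i : Fin n → ℂ) j)) = U.subtype '' Set.range b := by
        ext x
        constructor
        · rintro ⟨i, rfl⟩; exact ⟨b i, ⟨i, rfl⟩, rfl⟩
        · rintro ⟨y, ⟨i, rfl⟩, rfl⟩; exact ⟨i, rfl⟩
      rw [Matrix.row, hset, ← Submodule.map_span, b.span_eq, Submodule.map_top, Submodule.range_subtype]
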